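/- (WSPT-TRD optimality, Part I.) Suppose all weights are nonnegative: w j ≥ 0 for every j ∈ J. Then the early WSPT schedule minimizes obj over all feasible single-machine schedules: obj(S_WSPT) ≤ obj(S) for every feasible schedule S, where S_WSPT denotes the early WSPT schedule. -/

import Mathlib

open Finset

lemma wspt_aux_intervals {J : Type*} (F : Finset J) (S p : J → ℕ) (a b : ℕ)
    (hab : a ≤ b)
    (h1 : ∀ j ∈ F, a ≤ S j) (h2 : ∀ j ∈ F, S j + p j ≤ b)
    (h3 : ∀ j ∈ F, ∀ k ∈ F, j ≠ k → S j + p j ≤ S k ∨ S k + p k ≤ S j) :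
    a + ∑ j ∈ F, p j ≤ b := by
  have hdisj : ∀ j ∈ F, ∀ k ∈ F, j ≠ k →
      Disjoint (Finset.Ico (S j) (S j + p j)) (Finset.Ico (S k) (S k + p k)) := by
    intro j hj k hk hjk
    rw [Finset.disjoint_left]
    intro x hx hx'
    simp only [Finset.mem_Ico] at hx hx'
    rcases h3 j hj k hk hjk with h | h <;> omega
  have hcard : (F.biUnion (fun j => Finset.Ico (S j) (S j + p j))).card
      = ∑ j ∈ F, p j := by
    rw [Finset.card_biUnion hdisj]
    refine Finset.sum_congr rfl fun j _ => by rw [Nat.card_Ico]; omega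
  have hsub : F.biUnion (fun j => Finset.Ico (S j) (S j + p j)) ⊆ Finset.Ico a b := by
    intro x hx
    rw [Finset.mem_biUnion] at hx
    obtain ⟨j, hj, hx⟩ := hx
    rw [Finset.mem_Ico] at hx ⊢
    have := h1 j hj; have := h2 j hj
    omega
  have := Finset.card_le_card hsub
  rw [hcard, Nat.card_Ico] at this
  omega

lemma wspt_aux_prod {α β M : Type*} [Fintype α] [Fintype β] [AddCommMonoid M]
    (c : α → β → Prop) [∀ a b, Decidable (c a b)] (g : α → β → M) :
    ∑ x ∈ univ.filter (fun x : α × β => c x.1 x.2), g x.1 x.2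
      = ∑ i, ∑ k ∈ univ.filter (c i), g i k := by
  rw [Finset.sum_filter, Fintype.sum_prod_type]
  exact Finset.sum_congr rfl fun i _ => (Finset.sum_filter _ _).symm

theorem wspt_trd_part_one
    {J : Type*} [Fintype J] [Nonempty J]
    (p : J → ℕ) (w : J → ℚ) (T0 Tf : ℕ)
    (hp : ∀ j, 1 ≤ p j) (hT : T0 + ∑ j, p j ≤ Tf)
    (hw : ∀ j, 0 ≤ w j)
    (e : Fin (Fintype.card J) ≃ J)
    (hord : ∀ i : ℕ, ∀ h : i + 1 < Fintype.card J,
      w (e ⟨i + 1, h⟩) / (p (e ⟨i + 1, h⟩) : ℚ)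
        ≤ w (e ⟨i, Nat.lt_of_succ_lt h⟩) / (p (e ⟨i, Nat.lt_of_succ_lt h⟩) : ℚ))
    (SW : J → ℕ)
    (hSW0 : SW (e ⟨0, Fintype.card_pos⟩) = T0)
    (hSWstep : ∀ i : ℕ, ∀ h : i + 1 < Fintype.card J,
      SW (e ⟨i + 1, h⟩)
        = SW (e ⟨i, Nat.lt_of_succ_lt h⟩) + p (e ⟨i, Nat.lt_of_succ_lt h⟩)) :
    ∀ S : J → ℕ,
      (∀ j, T0 ≤ S j) → (∀ j, S j + p j ≤ Tf) →
      (∀ j k, j ≠ k → S j + p j ≤ S k ∨ S k + p k ≤ S j) →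
      ((univ.sup' univ_nonempty (fun j => SW j + p j) : ℕ) : ℚ)
          + ∑ j, w j * (SW j : ℚ)
        ≤ ((univ.sup' univ_nonempty (fun j => S j + p j) : ℕ) : ℚ)
          + ∑ j, w j * (S j : ℚ) := by
  classical
  intro S hS1 hS2 hS3
  have hnpos : 0 < Fintype.card J := Fintype.card_pos
  set Q : ℕ → ℕ := fun k => if h : k < Fintype.card J then p (e ⟨k, h⟩) else 0 with hQ
  -- SW formula
  have hSWf : ∀ i : ℕ, ∀ h : i < Fintype.card J,
      SW (e ⟨i, h⟩) = T0 + ∑ k ∈ Finset.range i, Q k := by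
    intro i
    induction i with
    | zero => intro h; simpa using hSW0
    | succ i ih =>
      intro h
      have h' := Nat.lt_of_succ_lt h
      rw [hSWstep i h, ih h', Finset.sum_range_succ]
      have : Q i = p (e ⟨i, h'⟩) := dif_pos h'
      omega
  have hQsum : ∑ k ∈ Finset.range (Fintype.card J), Q k = ∑ j, p j := by
    rw [← Fin.sum_univ_eq_sum_range]
    rw [← Equiv.sum_comp e p]
    refine Finset.sum_congr rfl fun i _ => ?_
    simp [hQ, i.isLt, Fin.eta]
  have hSWf2 : ∀ i : Fin (Fintype.card J), SW (e i)
      = T0 + ∑ k ∈ univ.filter (fun k : Fin (Fintype.card J) => k < i), p (e k) := by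
    intro i
    have h1 := hSWf i.val i.isLt
    rw [Fin.eta] at h1
    rw [h1]
    congr 1
    have step1 : ∑ k ∈ univ.filter (fun k : Fin (Fintype.card J) => k < i), p (e k)
        = ∑ k : Fin (Fintype.card J), if (k : ℕ) < (i : ℕ) then Q (k : ℕ) else 0 := by
      rw [Finset.sum_filter]
      refine Finset.sum_congr rfl fun k _ => ?_
      by_cases hk : k < i
      · rw [if_pos hk, if_pos (by exact_mod_cast hk)]
        simp [hQ, k.isLt, Fin.eta]
      · rw [if_neg hk, if_neg (by exact_mod_cast hk)]
    have step2 : ∑ k : Fin (Fintype.card J), (if (k : ℕ) < (i : ℕ) then Q (k : ℕ) else 0)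
        = ∑ k ∈ Finset.range (Fintype.card J), if k < (i : ℕ) then Q k else 0 :=
      Fin.sum_univ_eq_sum_range (fun k => if k < (i : ℕ) then Q k else 0) (Fintype.card J)
    have step3 : ∑ k ∈ Finset.range (Fintype.card J), (if k < (i : ℕ) then Q k else 0)
        = ∑ k ∈ Finset.range (i : ℕ), (if k < (i : ℕ) then Q k else 0) :=
      (Finset.sum_subset (Finset.range_subset_range.mpr i.isLt.le)
        (fun x _ hx => by rw [if_neg (by simpa using hx)])).symm
    have step4 : ∑ k ∈ Finset.range (i : ℕ), (if k < (i : ℕ) then Q k else 0)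
        = ∑ k ∈ Finset.range (i : ℕ), Q k :=
      Finset.sum_congr rfl fun k hk => if_pos (Finset.mem_range.mp hk)
    rw [step1, step2, step3, step4]
  -- ratio antitone
  have hratio : ∀ a b : ℕ, ∀ ha : a < Fintype.card J, ∀ hb : b < Fintype.card J,
      a ≤ b → w (e ⟨b, hb⟩) / (p (e ⟨b, hb⟩) : ℚ) ≤ w (e ⟨a, ha⟩) / (p (e ⟨a, ha⟩) : ℚ) := by
    intro a b
    induction b with
    | zero =>
      intro ha hb hab
      have h0 : a = 0 := Nat.le_zero.mp hab
      subst h0; exact le_rfl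
    | succ b ih =>
      intro ha hb hab
      by_cases hc : a = b + 1
      · subst hc; exact le_rfl
      · exact le_trans (hord b hb) (ih ha (Nat.lt_of_succ_lt hb) (by omega))
  have hppos : ∀ j : J, (0:ℚ) < (p j : ℚ) := fun j => by exact_mod_cast hp j
  have hcross : ∀ i k : Fin (Fintype.card J), k ≤ i →
      w (e i) * (p (e k) : ℚ) ≤ w (e k) * (p (e i) : ℚ) := by
    intro i k hk
    have hr := hratio k.val i.val k.isLt i.isLt hk
    rw [Fin.eta, Fin.eta] at hr
    rw [div_le_div_iff₀ (hppos (e i)) (hppos (e k))] at hr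
    linarith
  -- compaction bound
  have hB : ∀ j, T0 + ∑ k ∈ univ.filter (fun k => k ≠ j ∧ S k + p k ≤ S j), p k ≤ S j := by
    intro j
    apply wspt_aux_intervals _ S p T0 (S j) (hS1 j)
    · intro k _; exact hS1 k
    · intro k hk; exact (Finset.mem_filter.mp hk).2.2
    · intro k _ l _ hkl; exact hS3 k l hkl
  -- Cmax(S) ≥ T0 + ∑ p
  have hCS : T0 + ∑ j, p j ≤ univ.sup' univ_nonempty (fun j => S j + p j) := by
    have hT0le : T0 ≤ univ.sup' univ_nonempty (fun j => S j + p j) := by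
      obtain ⟨j0⟩ := (inferInstance : Nonempty J)
      have h1 := Finset.le_sup' (fun j => S j + p j) (Finset.mem_univ j0)
      have h2 := hS1 j0; omega
    exact wspt_aux_intervals univ S p T0 _ hT0le (fun j _ => hS1 j)
      (fun j _ => Finset.le_sup' (fun j => S j + p j) (Finset.mem_univ j))
      (fun j _ k _ hjk => hS3 j k hjk)
  -- Cmax(SW) ≤ T0 + ∑ p
  have hCSW : univ.sup' univ_nonempty (fun j => SW j + p j) ≤ T0 + ∑ j, p j := by
    apply Finset.sup'_le
    intro j _
    have hj : j = e (e.symm j) := (e.apply_symm_apply j).symm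
    rw [hj]
    set i := e.symm j with hi
    have h1 := hSWf i.val i.isLt
    rw [Fin.eta] at h1
    rw [h1]
    have h2 : p (e i) = Q i.val := by simp [hQ, i.isLt, Fin.eta]
    rw [h2]
    have h3 : ∑ k ∈ Finset.range i.val, Q k + Q i.val
        = ∑ k ∈ Finset.range (i.val+1), Q k := (Finset.sum_range_succ Q i.val).symm
    have h4 : ∑ k ∈ Finset.range (i.val+1), Q k
        ≤ ∑ k ∈ Finset.range (Fintype.card J), Q k :=
      Finset.sum_le_sum_of_subset (Finset.range_subset_range.mpr i.isLt)
    omega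
  -- tournament facts
  have htour : ∀ a b : Fin (Fintype.card J), a ≠ b →
      ¬(S (e b) + p (e b) ≤ S (e a)) → S (e a) + p (e a) ≤ S (e b) := by
    intro a b hab hnb
    have hne : e a ≠ e b := fun h => hab (e.injective h)
    rcases hS3 (e a) (e b) hne with h | h
    · exact h
    · exact absurd h hnb
  have hnotboth : ∀ a b : Fin (Fintype.card J),
      S (e a) + p (e a) ≤ S (e b) → ¬(S (e b) + p (e b) ≤ S (e a)) := by
    intro a b h1 h2
    have := hp (e a); have := hp (e b); omega
  -- the exchange argument on product sums
  have hcore : ∑ x ∈ univ.filter (fun x : Fin (Fintype.card J) × Fin (Fintype.card J) => x.2 < x.1),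
        w (e x.1) * (p (e x.2) : ℚ)
      ≤ ∑ x ∈ univ.filter (fun x : Fin (Fintype.card J) × Fin (Fintype.card J) =>
          x.2 ≠ x.1 ∧ S (e x.2) + p (e x.2) ≤ S (e x.1)), w (e x.1) * (p (e x.2) : ℚ) := by
    calc ∑ x ∈ univ.filter (fun x : Fin (Fintype.card J) × Fin (Fintype.card J) => x.2 < x.1),
            w (e x.1) * (p (e x.2) : ℚ)
        ≤ ∑ x ∈ univ.filter (fun x : Fin (Fintype.card J) × Fin (Fintype.card J) => x.2 < x.1),
            (if S (e x.2) + p (e x.2) ≤ S (e x.1) then w (e x.1) * (p (e x.2) : ℚ)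
             else w (e x.2) * (p (e x.1) : ℚ)) := by
          refine Finset.sum_le_sum fun x hx => ?_
          have hx' : x.2 < x.1 := (Finset.mem_filter.mp hx).2
          by_cases hb : S (e x.2) + p (e x.2) ≤ S (e x.1)
          · rw [if_pos hb]
          · rw [if_neg hb]; exact hcross x.1 x.2 hx'.le
      _ = ∑ x ∈ univ.filter (fun x : Fin (Fintype.card J) × Fin (Fintype.card J) =>
            x.2 ≠ x.1 ∧ S (e x.2) + p (e x.2) ≤ S (e x.1)), w (e x.1) * (p (e x.2) : ℚ) := by
          refine Finset.sum_nbij'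
            (fun x => if S (e x.2) + p (e x.2) ≤ S (e x.1) then x else x.swap)
            (fun x => if x.2 < x.1 then x else x.swap) ?_ ?_ ?_ ?_ ?_
          · intro x hx
            have hx' : x.2 < x.1 := (Finset.mem_filter.mp hx).2
            have hne : x.2 ≠ x.1 := ne_of_lt hx'
            by_cases hb : S (e x.2) + p (e x.2) ≤ S (e x.1)
            · rw [if_pos hb]
              exact Finset.mem_filter.mpr ⟨Finset.mem_univ _, hne, hb⟩
            · rw [if_neg hb]
              refine Finset.mem_filter.mpr ⟨Finset.mem_univ _, hne.symm, ?_⟩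
              exact htour x.1 x.2 hne.symm hb
          · intro x hx
            obtain ⟨-, hne, hb⟩ := Finset.mem_filter.mp hx
            by_cases hlt : x.2 < x.1
            · rw [if_pos hlt]; exact Finset.mem_filter.mpr ⟨Finset.mem_univ _, hlt⟩
            · rw [if_neg hlt]
              refine Finset.mem_filter.mpr ⟨Finset.mem_univ _, ?_⟩
              show x.1 < x.2
              rcases lt_or_gt_of_ne hne with h | h
              · exact absurd h hlt
              · exact h
          · intro x hx
            have hx' : x.2 < x.1 := (Finset.mem_filter.mp hx).2
            by_cases hb : S (e x.2) + p (e x.2) ≤ S (e x.1)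
            · rw [if_pos hb, if_pos hx']
            · rw [if_neg hb]
              have : ¬ (x.swap.2 < x.swap.1) := by
                simp only [Prod.snd_swap, Prod.fst_swap]
                exact fun h => absurd hx' (not_lt_of_gt h)
              rw [if_neg this, Prod.swap_swap]
          · intro x hx
            obtain ⟨-, hne, hb⟩ := Finset.mem_filter.mp hx
            by_cases hlt : x.2 < x.1
            · rw [if_pos hlt, if_pos hb]
            · rw [if_neg hlt]
              have : ¬ (S (e x.swap.2) + p (e x.swap.2) ≤ S (e x.swap.1)) := by
                simp only [Prod.snd_swap, Prod.fst_swap]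
                exact hnotboth x.2 x.1 hb
              rw [if_neg this, Prod.swap_swap]
          · intro x hx
            by_cases hb : S (e x.2) + p (e x.2) ≤ S (e x.1)
            · rw [if_pos hb, if_pos hb]
            · rw [if_neg hb, if_neg hb]
              simp only [Prod.snd_swap, Prod.fst_swap]
  -- reindex the B-sets
  have hBre : ∀ i : Fin (Fintype.card J),
      ∑ k ∈ univ.filter (fun k : Fin (Fintype.card J) => k ≠ i ∧ S (e k) + p (e k) ≤ S (e i)), p (e k)
        = ∑ k ∈ univ.filter (fun k : J => k ≠ e i ∧ S k + p k ≤ S (e i)), p k := by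
    intro i
    rw [Finset.sum_filter, Finset.sum_filter,
      ← Equiv.sum_comp e (fun k => if k ≠ e i ∧ S k + p k ≤ S (e i) then p k else 0)]
    refine Finset.sum_congr rfl fun k _ => ?_
    exact (if_congr (by simp [Ne, EmbeddingLike.apply_eq_iff_eq]) rfl rfl).symm
  -- main weighted-sum inequality
  have hsum : ∑ j, w j * (SW j : ℚ) ≤ ∑ j, w j * (S j : ℚ) := by
    have lhs_eq : ∑ j, w j * (SW j : ℚ)
        = (∑ i, w (e i) * (T0 : ℚ))
          + ∑ i, ∑ k ∈ univ.filter (fun k => k < i), w (e i) * (p (e k) : ℚ) := by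
      rw [← Equiv.sum_comp e (fun j => w j * (SW j : ℚ)), ← Finset.sum_add_distrib]
      refine Finset.sum_congr rfl fun i _ => ?_
      have hc : (SW (e i) : ℚ)
          = (T0 : ℚ) + ∑ k ∈ univ.filter (fun k => k < i), (p (e k) : ℚ) := by
        rw [hSWf2 i]; push_cast; ring
      rw [hc, mul_add, Finset.mul_sum]
    have rhs_ge : (∑ i, w (e i) * (T0 : ℚ))
          + ∑ i, ∑ k ∈ univ.filter (fun k => k ≠ i ∧ S (e k) + p (e k) ≤ S (e i)),
              w (e i) * (p (e k) : ℚ)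
        ≤ ∑ j, w j * (S j : ℚ) := by
      rw [← Equiv.sum_comp e (fun j => w j * (S j : ℚ)), ← Finset.sum_add_distrib]
      refine Finset.sum_le_sum fun i _ => ?_
      rw [← Finset.mul_sum, ← mul_add]
      refine mul_le_mul_of_nonneg_left ?_ (hw (e i))
      have h2 : T0 + ∑ k ∈ univ.filter
            (fun k : Fin (Fintype.card J) => k ≠ i ∧ S (e k) + p (e k) ≤ S (e i)), p (e k)
          ≤ S (e i) := by
        rw [hBre i]; exact hB (e i)
      exact_mod_cast h2
    rw [lhs_eq]
    refine le_trans (add_le_add (le_refl _) ?_) rhs_ge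
    rw [← wspt_aux_prod (fun i k : Fin (Fintype.card J) => k < i)
          (fun i k => w (e i) * (p (e k) : ℚ)),
        ← wspt_aux_prod (fun i k : Fin (Fintype.card J) => k ≠ i ∧ S (e k) + p (e k) ≤ S (e i))
          (fun i k => w (e i) * (p (e k) : ℚ))]
    exact hcore
  have c1 : ((univ.sup' univ_nonempty (fun j => SW j + p j) : ℕ) : ℚ)
      ≤ ((univ.sup' univ_nonempty (fun j => S j + p j) : ℕ) : ℚ) := by
    exact_mod_cast le_trans hCSW hCS
  linarith
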